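/- Let G*φ be an HNN extension of G relative to an isomorphism φ: A → B between subgroups A, B ≤ G, with stable letter t. If g_0 t^{ε_1} g_1 t^{ε_2} ⋯ g_{n-1} t^{ε_n} g_n = h_0 t^{η_1} h_1 t^{η_2} ⋯ h_{n-1} t^{η_n} h_n where both sequences are reduced, then ε_i = η_i for all i, and there exists a sequence (c_1, ..., c_n) of elements of A ∪ B such that g_0 = h_0 c_1, g_n = φ^{ε_n}(c_n^{-1}) h_n, g_i = φ^{ε_i}(c_i^{-1}) h_i c_{i+1} for 1 ≤ i ≤ n-1, and c_i ∈ A if ε_i = 1 while c_i ∈ B if ε_i = -1. -/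

import Mathlib

/-!
Abstract model of an HNN extension `G*φ` (with `φ : A → B`, paper convention
`t⁻¹ a t = φ a`): a group `K` with a subgroup `G`, subgroups `A B ≤ G`, and a stable
letter `t : K` conjugating `A` onto `B`, such that `K` is generated by `G` and `t` and
Britton's lemma holds.  Throughout, `φ^ε (x)` is expressed as `(t ^ ε)⁻¹ * x * t ^ ε`.
-/

namespace HNNStmt

variable {K : Type*} [Group K]

/-- The product `g 0 * t ^ ε 1 * g 1 * ⋯ * g (n-1) * t ^ ε n * g n` of an HNN word with
a trailing group element. -/
def wordProd (t : K) {n : ℕ} (g : Fin (n + 1) → K) (ε : Fin n → ℤ) : K :=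
  (List.ofFn (fun i : Fin n => g i.castSucc * t ^ ε i)).prod * g (Fin.last n)

/-- The product `g 0 * t ^ ε 1 * g 1 * ⋯ * g (n-1) * t ^ ε n` of a cyclic HNN word. -/
def cycProd (t : K) {n : ℕ} (g : Fin n → K) (ε : Fin n → ℤ) : K :=
  (List.ofFn (fun i : Fin n => g i * t ^ ε i)).prod

/-- A sequence `(g 0, t ^ ε 1, g 1, …, t ^ ε n, g n)` is *reduced* if it has no
consecutive subsequence `(t⁻¹, gᵢ, t)` with `gᵢ ∈ A` and no `(t, gⱼ, t⁻¹)` with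
`gⱼ ∈ B`. -/
def ReducedWord (A B : Subgroup K) {n : ℕ} (g : Fin (n + 1) → K) (ε : Fin n → ℤ) : Prop :=
  ∀ i : ℕ, ∀ h : i + 1 < n,
    ¬(ε ⟨i, by omega⟩ = -1 ∧ g ⟨i + 1, by omega⟩ ∈ A ∧ ε ⟨i + 1, h⟩ = 1) ∧
    ¬(ε ⟨i, by omega⟩ = 1 ∧ g ⟨i + 1, by omega⟩ ∈ B ∧ ε ⟨i + 1, h⟩ = -1)

/-- A cyclic word `(g 0, t ^ ε 1, …, g (n-1), t ^ ε n)` is *cyclically reduced* if all of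
its cyclic permutations are reduced, i.e. the reducedness condition holds for all
consecutive pairs, cyclically. -/
def CyclicallyReducedWord (A B : Subgroup K) {n : ℕ} (g : Fin n → K) (ε : Fin n → ℤ) :
    Prop :=
  ∀ i : Fin n,
    ¬(ε i = -1 ∧ g ⟨((i : ℕ) + 1) % n, Nat.mod_lt _ i.pos⟩ ∈ A ∧
        ε ⟨((i : ℕ) + 1) % n, Nat.mod_lt _ i.pos⟩ = 1) ∧
    ¬(ε i = 1 ∧ g ⟨((i : ℕ) + 1) % n, Nat.mod_lt _ i.pos⟩ ∈ B ∧
        ε ⟨((i : ℕ) + 1) % n, Nat.mod_lt _ i.pos⟩ = -1)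

/-- Britton's lemma: a reduced word with at least one occurrence of the stable letter
has product `≠ 1`. -/
def BrittonProperty (G A B : Subgroup K) (t : K) : Prop :=
  ∀ (n : ℕ) (g : Fin (n + 1) → K) (ε : Fin n → ℤ), (∀ i, g i ∈ G) →
    (∀ i, ε i = 1 ∨ ε i = -1) → ReducedWord A B g ε → 1 ≤ n → wordProd t g ε ≠ 1

/-- `A` is malnormal in `G`: for `g ∈ G \ A`, `g⁻¹ A g ∩ A = {1}`. -/
def MalnormalIn (A G : Subgroup K) : Prop :=
  ∀ g ∈ G, g ∉ A → ∀ x ∈ A, g⁻¹ * x * g ∈ A → x = 1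

/-- list-form word product -/
def lwp (t : K) (l : List (K × ℤ)) (a : K) : K := (l.map fun p => p.1 * t ^ p.2).prod * a

def Rel (A B : Subgroup K) (p q : K × ℤ) : Prop :=
  ¬(p.2 = -1 ∧ q.1 ∈ A ∧ q.2 = 1) ∧ ¬(p.2 = 1 ∧ q.1 ∈ B ∧ q.2 = -1)

@[simp] lemma lwp_nil (t a : K) : lwp t [] a = a := by simp [lwp]

@[simp] lemma lwp_cons (t a x : K) (e : ℤ) (l : List (K × ℤ)) :
    lwp t ((x, e) :: l) a = x * t ^ e * lwp t l a := by
  simp [lwp, mul_assoc]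

lemma lwp_append (t a : K) (l₁ l₂ : List (K × ℤ)) :
    lwp t (l₁ ++ l₂) a = lwp t l₁ (lwp t l₂ a) := by
  simp [lwp, mul_assoc]

lemma lwp_mul (t a z : K) (l : List (K × ℤ)) : lwp t l (a * z) = lwp t l a * z := by
  simp [lwp, mul_assoc]

lemma lwp_glue (t a z c : K) (u : ℤ) (L M : List (K × ℤ)) :
    lwp t L a * lwp t ((z, u) :: M) c = lwp t (L ++ (a * z, u) :: M) c := by
  rw [lwp_append, lwp_cons, lwp_cons, mul_assoc, mul_assoc, ← lwp_mul, mul_assoc]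

/-- inverse-word builder: `go r a` is the inverse of the word whose pair list is
`r.reverse` and whose trailing element is `a`. -/
def go : List (K × ℤ) → K → List (K × ℤ) × K
  | [], a => ([], a⁻¹)
  | (x, e) :: r, a => ((a⁻¹, -e) :: (go r x).1, (go r x).2)

lemma go_spec (t : K) : ∀ (r : List (K × ℤ)) (a : K),
    lwp t (go r a).1 (go r a).2 = (lwp t r.reverse a)⁻¹
  | [], a => by simp [go]
  | (x, e) :: r, a => by
    have ih := go_spec t r x
    simp only [go, lwp_cons, ih, List.reverse_cons, lwp_append, lwp_cons, lwp_nil]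
    rw [show x * t ^ e * a = x * (t ^ e * a) by group, lwp_mul]
    simp [mul_assoc, zpow_neg]

lemma go_mem (G : Subgroup K) : ∀ (r : List (K × ℤ)) (a : K),
    (∀ p ∈ r, p.1 ∈ G) → a ∈ G →
    (∀ p ∈ (go r a).1, p.1 ∈ G) ∧ (go r a).2 ∈ G
  | [], a => by intro _ ha; simpa [go] using inv_mem ha
  | (x, e) :: r, a => by
    intro hr ha
    have hx : x ∈ G := hr (x, e) (by simp)
    have ih := go_mem G r x (fun p hp => hr p (by simp [hp])) hx
    refine ⟨?_, ih.2⟩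
    intro p hp
    simp only [go, List.mem_cons] at hp
    rcases hp with rfl | hp
    · exact inv_mem ha
    · exact ih.1 p hp

lemma go_exp : ∀ (r : List (K × ℤ)) (a : K),
    (∀ p ∈ r, p.2 = 1 ∨ p.2 = -1) → ∀ p ∈ (go r a).1, p.2 = 1 ∨ p.2 = -1
  | [], a => by simp [go]
  | (x, e) :: r, a => by
    intro hr p hp
    have ih := go_exp r x (fun p hp => hr p (by simp [hp]))
    simp only [go, List.mem_cons] at hp
    rcases hp with rfl | hp
    · have := hr (x, e) (by simp); dsimp at this ⊢; omega
    · exact ih p hp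

lemma go_head (x : K) (e : ℤ) (r : List (K × ℤ)) (a : K) :
    (go ((x, e) :: r) a).1.head? = some (a⁻¹, -e) := by simp [go]

lemma go_chain (A B : Subgroup K) : ∀ (r : List (K × ℤ)) (a : K),
    List.Chain' (flip (Rel A B)) r → List.Chain' (Rel A B) (go r a).1
  | [], a => by simp [go, List.Chain']
  | (x, e) :: r, a => by
    intro hr
    unfold List.Chain' at hr ⊢
    rw [List.isChain_cons] at hr
    have ih := go_chain A B r x hr.2
    simp only [go]
    rw [List.isChain_cons]
    refine ⟨?_, ih⟩
    intro q hq
    match r with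
    | [] => simp [go] at hq
    | (y, f) :: r' =>
      rw [go_head] at hq
      simp only [Option.mem_def, Option.some.injEq] at hq
      subst hq
      have h1 : Rel A B (y, f) (x, e) := hr.1 (y, f) (by simp)
      obtain ⟨h1a, h1b⟩ := h1
      simp only [Rel] at h1a h1b ⊢
      constructor
      · rintro ⟨he, hm, hf⟩
        exact h1a ⟨by omega, by simpa using hm, by omega⟩
      · rintro ⟨he, hm, hf⟩
        exact h1b ⟨by omega, by simpa using hm, by omega⟩

lemma lwp_inv (t : K) (l : List (K × ℤ)) (a : K) :
    (lwp t l a)⁻¹ = lwp t (go l.reverse a).1 (go l.reverse a).2 := by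
  rw [go_spec, List.reverse_reverse]

lemma wordProd_eq_lwp (t : K) {n : ℕ} (g : Fin (n + 1) → K) (ε : Fin n → ℤ) :
    wordProd t g ε = lwp t (List.ofFn fun i => (g i.castSucc, ε i)) (g (Fin.last n)) := by
  unfold wordProd lwp
  rw [List.map_ofFn]
  rfl

lemma britton_list (G A B : Subgroup K) (t : K) (britton : BrittonProperty G A B t)
    (l : List (K × ℤ)) (a : K)
    (hmem : ∀ p ∈ l, p.1 ∈ G) (ha : a ∈ G)
    (hexp : ∀ p ∈ l, p.2 = 1 ∨ p.2 = -1)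
    (hred : List.Chain' (Rel A B) l) (hne : l ≠ []) :
    lwp t l a ≠ 1 := by
  set n := l.length with hn
  set g : Fin (n + 1) → K := Fin.snoc (fun i : Fin n => (l.get i).1) a with hgdef
  set ε : Fin n → ℤ := fun i => (l.get i).2 with hεdef
  have hofn : (List.ofFn fun i : Fin n => (g i.castSucc, ε i)) = l := by
    have : (List.ofFn fun i : Fin n => (g i.castSucc, ε i)) =
        List.ofFn fun i : Fin n => l.get i := by
      congr 1
      ext i : 1
      rw [hgdef]
      simp [Fin.snoc_castSucc, hεdef]
    rw [this]
    exact List.ofFn_getElem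
  have hlwp : lwp t l a = wordProd t g ε := by
    rw [wordProd_eq_lwp, hofn, hgdef, Fin.snoc_last]
  rw [hlwp]
  apply britton
  · intro i
    induction i using Fin.lastCases with
    | last => rw [hgdef]; rw [Fin.snoc_last]; exact ha
    | cast i =>
      rw [hgdef, Fin.snoc_castSucc]
      exact hmem _ (List.get_mem l i)
  · intro i
    exact hexp _ (List.get_mem l i)
  · intro i hi
    unfold List.Chain' at hred
    rw [List.isChain_iff_getElem] at hred
    have key := hred i (by omega)
    obtain ⟨k1, k2⟩ := key
    have hcast : (⟨i + 1, by omega⟩ : Fin (n + 1)) = (⟨i + 1, hi⟩ : Fin n).castSucc := rfl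
    constructor
    · rintro ⟨p1, p2, p3⟩
      rw [hcast, hgdef, Fin.snoc_castSucc] at p2
      exact k1 ⟨p1, p2, p3⟩
    · rintro ⟨p1, p2, p3⟩
      rw [hcast, hgdef, Fin.snoc_castSucc] at p2
      exact k2 ⟨p1, p2, p3⟩
  · have h1 : 0 < l.length := List.length_pos_iff.2 hne
    have h2 : n = l.length := hn
    omega

lemma junction (G A B : Subgroup K) (t : K) (britton : BrittonProperty G A B t)
    (l₁ l₂ : List (K × ℤ)) (x y : K) (e f : ℤ) (a b : K)
    (mem₁ : ∀ p ∈ l₁ ++ [(x, e)], p.1 ∈ G) (ha : a ∈ G)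
    (mem₂ : ∀ p ∈ l₂ ++ [(y, f)], p.1 ∈ G) (hb : b ∈ G)
    (exp₁ : ∀ p ∈ l₁ ++ [(x, e)], p.2 = 1 ∨ p.2 = -1)
    (exp₂ : ∀ p ∈ l₂ ++ [(y, f)], p.2 = 1 ∨ p.2 = -1)
    (red₁ : List.Chain' (Rel A B) (l₁ ++ [(x, e)]))
    (red₂ : List.Chain' (Rel A B) (l₂ ++ [(y, f)]))
    (heq : lwp t (l₁ ++ [(x, e)]) a = lwp t (l₂ ++ [(y, f)]) b) :
    e = f ∧ (e = 1 → a * b⁻¹ ∈ B) ∧ (e = -1 → a * b⁻¹ ∈ A) := by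
  have he : e = 1 ∨ e = -1 := exp₁ (x, e) (by simp)
  have hf : f = 1 ∨ f = -1 := exp₂ (y, f) (by simp)
  by_contra hcon
  set m : List (K × ℤ) := (go l₂.reverse y).1 with hm
  set c : K := (go l₂.reverse y).2 with hc
  -- the reverse of `l₂ ++ [(y,f)]` is `(y,f) :: l₂.reverse`
  have hinv : (lwp t (l₂ ++ [(y, f)]) b)⁻¹ = lwp t ((b⁻¹, -f) :: m) c := by
    rw [lwp_inv]
    have hrev : (l₂ ++ [(y, f)]).reverse = (y, f) :: l₂.reverse := by simp
    rw [hrev]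
    rfl
  have hW : lwp t ((l₁ ++ [(x, e)]) ++ (a * b⁻¹, -f) :: m) c = 1 := by
    rw [← lwp_glue, ← hinv, heq, mul_inv_cancel]
  -- memberships for the inverse part
  have gomem := go_mem G l₂.reverse y
    (fun p hp => mem₂ p (by simp at hp ⊢; tauto))
    (mem₂ (y, f) (by simp))
  have goexp := go_exp l₂.reverse y
    (fun p hp => exp₂ p (by simp at hp ⊢; tauto))
  -- apply Britton to the combined word
  refine britton_list G A B t britton _ c ?_ gomem.2 ?_ ?_ (by simp) hW
  · intro p hp
    simp only [List.mem_append, List.mem_cons, List.mem_singleton] at hp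
    rcases hp with (hp | rfl | hp0) | rfl | hp
    · exact mem₁ p (by simp [hp])
    · exact mem₁ (x, e) (by simp)
    · exact absurd hp0 List.not_mem_nil
    · exact mul_mem ha (inv_mem hb)
    · exact gomem.1 p hp
  · intro p hp
    simp only [List.mem_append, List.mem_cons, List.mem_singleton] at hp
    rcases hp with (hp | rfl | hp0) | rfl | hp
    · exact exp₁ p (by simp [hp])
    · exact exp₁ (x, e) (by simp)
    · exact absurd hp0 List.not_mem_nil
    · dsimp; omega
    · exact goexp p hp
  · -- reducedness of the combined word
    apply List.IsChain.append red₁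
    · rw [List.isChain_cons]
      constructor
      · -- relation between the junction pair and the head of `m`
        intro q hq
        match hl₂ : l₂.reverse with
        | [] => rw [hm, hl₂] at hq; simp [go] at hq
        | (z, u) :: r' =>
          rw [hm, hl₂, go_head] at hq
          simp only [Option.mem_def, Option.some.injEq] at hq
          subst hq
          have hl₂' : l₂ = r'.reverse ++ [(z, u)] := by
            rw [← List.reverse_reverse l₂, hl₂]; simp
          have hsuf : [(z, u), (y, f)] <:+ (l₂ ++ [(y, f)]) := by
            rw [hl₂']
            exact ⟨r'.reverse, by simp⟩
          have hrel : Rel A B (z, u) (y, f) :=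
            List.isChain_pair.1 (List.IsChain.suffix red₂ hsuf)
          obtain ⟨r1, r2⟩ := hrel
          simp only [Rel, Prod.fst, Prod.snd] at r1 r2 ⊢
          constructor
          · rintro ⟨q1, q2, q3⟩
            exact r1 ⟨by omega, by simpa using q2, by omega⟩
          · rintro ⟨q1, q2, q3⟩
            exact r2 ⟨by omega, by simpa using q2, by omega⟩
      · -- reducedness of `m`
        rw [hm]
        apply go_chain
        unfold List.Chain'
        rw [List.isChain_reverse]
        have : List.Chain' (Rel A B) l₂ := List.IsChain.prefix red₂ ⟨[(y, f)], rfl⟩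
        simpa [Function.flip_def, List.Chain'] using this
    · -- relation at the junction
      intro p hp q hq
      rw [List.getLast?_concat] at hp
      simp only [Option.mem_def, Option.some.injEq, List.head?_cons] at hp hq
      subst hp; subst hq
      simp only [Rel]
      constructor
      · rintro ⟨q1, q2, q3⟩
        exact hcon ⟨by omega, fun h1 => absurd (h1 ▸ q1) (by norm_num), fun _ => q2⟩
      · rintro ⟨q1, q2, q3⟩
        exact hcon ⟨by omega, fun _ => q2, fun h1 => absurd (h1 ▸ q1) (by norm_num)⟩

lemma wordProd_nil (t : K) (g : Fin 1 → K) (ε : Fin 0 → ℤ) : wordProd t g ε = g 0 := by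
  simp [wordProd]

lemma wordProd_snoc (t : K) {n : ℕ} (g : Fin (n + 2) → K) (ε : Fin (n + 1) → ℤ) :
    wordProd t g ε = wordProd t (fun i : Fin (n + 1) => g i.castSucc)
      (fun i : Fin n => ε i.castSucc) * t ^ ε (Fin.last n) * g (Fin.last (n + 1)) := by
  unfold wordProd
  rw [List.ofFn_succ']
  simp only [List.concat_eq_append, List.prod_append, List.prod_cons, List.prod_nil]
  group

lemma reduced_chain {A B : Subgroup K} {n : ℕ} {g : Fin (n + 1) → K} {ε : Fin n → ℤ}
    (hr : ReducedWord A B g ε) :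
    List.Chain' (Rel A B) (List.ofFn fun i => (g i.castSucc, ε i)) := by
  unfold List.Chain'
  rw [List.isChain_iff_getElem]
  intro i hi
  simp only [List.length_ofFn] at hi
  have h1 : i + 1 < n := by omega
  simp only [List.getElem_ofFn]
  exact hr i h1

lemma key (G A B : Subgroup K) (t : K) (hAle : A ≤ G) (hBle : B ≤ G)
    (ht : ∀ a ∈ A, t⁻¹ * a * t ∈ B) (ht' : ∀ b ∈ B, t * b * t⁻¹ ∈ A)
    (britton : BrittonProperty G A B t) :
    ∀ (n : ℕ) (g h : Fin (n + 1) → K) (ε η : Fin n → ℤ),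
    (∀ i, g i ∈ G) → (∀ i, h i ∈ G) →
    (∀ i, ε i = 1 ∨ ε i = -1) → (∀ i, η i = 1 ∨ η i = -1) →
    ReducedWord A B g ε → ReducedWord A B h η →
    wordProd t g ε = wordProd t h η →
    (∀ i, ε i = η i) ∧
    ∃ c : Fin (n + 1) → K, c (Fin.last n) = 1 ∧
      (∀ i : Fin n, (ε i = 1 → c i.castSucc ∈ A) ∧ (ε i = -1 → c i.castSucc ∈ B)) ∧
      g 0 = h 0 * c 0 ∧
      (∀ i : Fin n,
        g i.succ = (t ^ ε i)⁻¹ * (c i.castSucc)⁻¹ * t ^ ε i * h i.succ * c i.succ) := by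
  intro n
  induction n with
  | zero =>
    intro g h ε η hg hh hε hη hgr hhr heq
    refine ⟨fun i => i.elim0, fun _ => 1, rfl, fun i => i.elim0, ?_, fun i => i.elim0⟩
    rw [wordProd_nil, wordProd_nil] at heq
    simpa using heq
  | succ n ih =>
    intro g h ε η hg hh hε hη hgr hhr heq
    -- set up the junction
    set ga := g (Fin.last (n + 1)) with hga
    set hb := h (Fin.last (n + 1)) with hhb
    have hsplit₁ : (List.ofFn fun i : Fin (n + 1) => (g i.castSucc, ε i)) =
        (List.ofFn fun i : Fin n => (g i.castSucc.castSucc, ε i.castSucc)) ++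
          [(g (Fin.last n).castSucc, ε (Fin.last n))] := by
      rw [List.ofFn_succ', List.concat_eq_append]
    have hsplit₂ : (List.ofFn fun i : Fin (n + 1) => (h i.castSucc, η i)) =
        (List.ofFn fun i : Fin n => (h i.castSucc.castSucc, η i.castSucc)) ++
          [(h (Fin.last n).castSucc, η (Fin.last n))] := by
      rw [List.ofFn_succ', List.concat_eq_append]
    have heqL : lwp t ((List.ofFn fun i : Fin n => (g i.castSucc.castSucc, ε i.castSucc)) ++
          [(g (Fin.last n).castSucc, ε (Fin.last n))]) ga =
        lwp t ((List.ofFn fun i : Fin n => (h i.castSucc.castSucc, η i.castSucc)) ++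
          [(h (Fin.last n).castSucc, η (Fin.last n))]) hb := by
      rw [← hsplit₁, ← hsplit₂, ← wordProd_eq_lwp, ← wordProd_eq_lwp]
      exact heq
    have hjun := junction G A B t britton _ _ _ _ _ _ ga hb
      (by rw [← hsplit₁]; intro p hp; rw [List.mem_ofFn] at hp; obtain ⟨i, rfl⟩ := hp
          exact hg _)
      (hg _)
      (by rw [← hsplit₂]; intro p hp; rw [List.mem_ofFn] at hp; obtain ⟨i, rfl⟩ := hp
          exact hh _)
      (hh _)
      (by rw [← hsplit₁]; intro p hp; rw [List.mem_ofFn] at hp; obtain ⟨i, rfl⟩ := hp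
          exact hε _)
      (by rw [← hsplit₂]; intro p hp; rw [List.mem_ofFn] at hp; obtain ⟨i, rfl⟩ := hp
          exact hη _)
      (by rw [← hsplit₁]; exact reduced_chain hgr)
      (by rw [← hsplit₂]; exact reduced_chain hhr)
      heqL
    obtain ⟨hef, hxB, hxA⟩ := hjun
    set e := ε (Fin.last n) with hedef
    -- the correcting element
    set d : K := t ^ e * (ga * hb⁻¹) * (t ^ e)⁻¹ with hd
    have hdA : e = 1 → d ∈ A := by
      intro h1
      rw [hd, h1, zpow_one]
      exact ht' _ (hxB h1)
    have hdB : e = -1 → d ∈ B := by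
      intro h1
      rw [hd, h1]
      have : t ^ (-1 : ℤ) = t⁻¹ := by simp
      rw [this, inv_inv]
      exact ht _ (hxA h1)
    have hdG : d ∈ G := by
      rcases hε (Fin.last n) with h1 | h1
      · exact hAle (hdA h1)
      · exact hBle (hdB h1)
    -- shortened words
    set g' : Fin (n + 1) → K := fun i => g i.castSucc with hg'def
    set h'' : Fin (n + 1) → K := fun i => h i.castSucc with hh''def
    set h' : Fin (n + 1) → K :=
      Fin.snoc (fun i : Fin n => h i.castSucc.castSucc) (h (Fin.last n).castSucc * d⁻¹)
      with hh'def
    set ε' : Fin n → ℤ := fun i => ε i.castSucc with hε'def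
    set η' : Fin n → ℤ := fun i => η i.castSucc with hη'def
    have hh'cs : ∀ i : Fin n, h' i.castSucc = h i.castSucc.castSucc := by
      intro i; rw [hh'def]; exact Fin.snoc_castSucc _ _ i
    have hh'last : h' (Fin.last n) = h (Fin.last n).castSucc * d⁻¹ := by
      rw [hh'def]; exact Fin.snoc_last _ _
    -- product equality for the shortened words
    have heq' : wordProd t g' ε' = wordProd t h' η' := by
      have e1 : wordProd t g ε = wordProd t g' ε' * t ^ e * ga := wordProd_snoc t g ε
      have e2 : wordProd t h η = wordProd t h'' η' * t ^ η (Fin.last n) * hb :=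
        wordProd_snoc t h η
      have e2' : wordProd t h η = wordProd t h'' η' * t ^ e * hb := by
        rw [hef]; exact e2
      have heq2 : wordProd t g' ε' * t ^ e * ga = wordProd t h'' η' * t ^ e * hb := by
        rw [← e1, ← e2']; exact heq
      have hw : wordProd t h' η' = wordProd t h'' η' * d⁻¹ := by
        unfold wordProd
        have hl : (List.ofFn fun i : Fin n => h' i.castSucc * t ^ η' i) =
            (List.ofFn fun i : Fin n => h'' i.castSucc * t ^ η' i) := by
          congr 1
          funext i
          rw [hh'cs i]
        rw [hl, hh'last]
        exact (mul_assoc _ _ _).symm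
      rw [hw]
      have hdinv : d⁻¹ * (t ^ e * ga) = t ^ e * hb := by
        rw [hd]; group
      refine mul_right_cancel (b := t ^ e * ga) ?_
      rw [mul_assoc (wordProd t h'' η'), hdinv, ← mul_assoc, ← mul_assoc]
      exact heq2
    -- apply the induction hypothesis
    have hgr' : ReducedWord A B g' ε' := by
      intro i hi
      exact hgr i (by omega)
    have hhr' : ReducedWord A B h' η' := by
      intro i hi
      have hne : (⟨i + 1, by omega⟩ : Fin (n + 1)) ≠ Fin.last n :=
        Fin.ne_of_val_ne (by simpa using by omega)
      obtain ⟨j, hj⟩ := Fin.exists_castSucc_eq.2 hne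
      have hmm := hhr i (by omega)
      constructor
      · rintro ⟨p1, p2, p3⟩
        rw [← hj, hh'cs j] at p2
        refine hmm.1 ⟨p1, ?_, p3⟩
        have : j.castSucc.castSucc = (⟨i + 1, by omega⟩ : Fin (n + 2)) := by
          rw [Fin.ext_iff] at hj ⊢
          simpa using hj
        rwa [this] at p2
      · rintro ⟨p1, p2, p3⟩
        rw [← hj, hh'cs j] at p2
        refine hmm.2 ⟨p1, ?_, p3⟩
        have : j.castSucc.castSucc = (⟨i + 1, by omega⟩ : Fin (n + 2)) := by
          rw [Fin.ext_iff] at hj ⊢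
          simpa using hj
        rwa [this] at p2
    have hh'mem : ∀ i, h' i ∈ G := by
      intro i
      induction i using Fin.lastCases with
      | last => rw [hh'last]; exact mul_mem (hh _) (inv_mem hdG)
      | cast i => rw [hh'cs i]; exact hh _
    obtain ⟨hεη', c', hc'last, hc'mem, hc'0, hc'rel⟩ :=
      ih g' h' ε' η' (fun i => hg _) hh'mem (fun i => hε _) (fun i => hη _) hgr' hhr' heq'
    -- assemble the answer
    set c'' : Fin (n + 1) → K := Fin.snoc (fun i : Fin n => c' i.castSucc) d⁻¹ with hc''def
    set c : Fin (n + 2) → K := Fin.snoc c'' 1 with hcdef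
    have hccs : ∀ j : Fin (n + 1), c j.castSucc = c'' j := fun j => Fin.snoc_castSucc _ _ j
    have hc''cs : ∀ j : Fin n, c'' j.castSucc = c' j.castSucc :=
      fun j => Fin.snoc_castSucc _ _ j
    have hc''last : c'' (Fin.last n) = d⁻¹ := Fin.snoc_last _ _
    refine ⟨?_, c, Fin.snoc_last _ _, ?_, ?_, ?_⟩
    · -- exponents agree
      intro i
      induction i using Fin.lastCases with
      | last => exact hef
      | cast i => exact hεη' i
    · -- membership of the c sequence
      intro i
      induction i using Fin.lastCases with
      | last =>
        rw [hccs, hc''last]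
        exact ⟨fun h1 => inv_mem (hdA h1), fun h1 => inv_mem (hdB h1)⟩
      | cast i =>
        rw [hccs, hc''cs]
        exact hc'mem i
    · -- g 0 = h 0 * c 0
      have h0 : (0 : Fin (n + 2)) = (0 : Fin (n + 1)).castSucc := rfl
      rw [h0, hccs]
      rcases Nat.eq_zero_or_pos n with hn0 | hn0
      · subst hn0
        have h3 : c'' 0 = d⁻¹ := hc''last
        rw [h3]
        have h1 : h' 0 = h 0 * d⁻¹ := hh'last
        have h2 : c' 0 = 1 := hc'last
        rw [h1, h2, mul_one] at hc'0
        exact hc'0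
      · have hne : (0 : Fin (n + 1)) ≠ Fin.last n :=
          Fin.ne_of_val_ne (by simpa using hn0.ne)
        obtain ⟨j, hj⟩ := Fin.exists_castSucc_eq.2 hne
        have h3 : c'' 0 = c' 0 := by rw [← hj, hc''cs, hj]
        have h1 : h' 0 = h 0 := by
          rw [← hj, hh'cs, hj]
          rfl
        rw [h3]
        rw [h1] at hc'0
        exact hc'0
    · -- the main relation
      intro i
      induction i using Fin.lastCases with
      | last =>
        have h1 : c (Fin.last n).castSucc = d⁻¹ := by rw [hccs, hc''last]
        have h2 : c (Fin.last n).succ = (1 : K) := Fin.snoc_last _ _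
        have h3 : g (Fin.last n).succ = ga := rfl
        have h4 : h (Fin.last n).succ = hb := rfl
        have h5 : ε (Fin.last n) = e := rfl
        rw [h1, h2, h3, h4, h5, hd]
        group
      | cast i =>
        have hrel := hc'rel i
        have e1 : g' i.succ = g i.castSucc.succ := by
          rw [hg'def]
          simp only [Fin.succ_castSucc]
        have e2 : c i.castSucc.castSucc = c' i.castSucc := by
          rw [hccs, hc''cs]
        have e3 : ε' i = ε i.castSucc := rfl
        rw [e1, e3] at hrel
        rw [e2]
        have e4 : c i.castSucc.succ = c'' i.succ := by
          rw [Fin.succ_castSucc]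
          exact hccs i.succ
        rw [e4]
        by_cases hl : i.succ = Fin.last n
        · have e5 : c'' i.succ = d⁻¹ := by rw [hl, hc''last]
          have e6 : h' i.succ = h (Fin.last n).castSucc * d⁻¹ := by rw [hl, hh'last]
          have e7 : c' i.succ = 1 := by rw [hl, hc'last]
          rw [e6, e7, mul_one] at hrel
          rw [e5, hrel]
          have e8 : h i.castSucc.succ = h (Fin.last n).castSucc := by rw [← hl, Fin.succ_castSucc]
          rw [e8]
          group
        · obtain ⟨j, hj⟩ := Fin.exists_castSucc_eq.2 hl
          have e5 : c'' i.succ = c' i.succ := by rw [← hj, hc''cs, hj]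
          have e6 : h' i.succ = h i.succ.castSucc := by rw [← hj, hh'cs, hj]
          rw [e6] at hrel
          rw [e5, hrel]
          have e8 : h i.castSucc.succ = h i.succ.castSucc := by rw [Fin.succ_castSucc]
          rw [e8]

/-- If two reduced HNN words (with trailing group elements) have equal
products, then their exponent sequences agree, and the group elements differ by a
sequence `(c 1, …, c n)` with `c i ∈ A` if `ε i = 1` and `c i ∈ B` if `ε i = -1`:
`g 0 = h 0 * c 1`, `g i = φ^(ε i) (c i⁻¹) * h i * c (i+1)` for `1 ≤ i ≤ n - 1`, and
`g n = φ^(ε n) (c n⁻¹) * h n`.  Here `φ^ε (x) = (t ^ ε)⁻¹ * x * t ^ ε`, the sequence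
`c` is indexed by `Fin (n+1)` with `c (i-1)` standing for the paper's `cᵢ`, and is
padded by the sentinel value `c n = 1`. -/
theorem statement6 (G A B : Subgroup K) (t : K) (hA : A ≤ G) (hB : B ≤ G)
    (ht : ∀ a ∈ A, t⁻¹ * a * t ∈ B) (ht' : ∀ b ∈ B, t * b * t⁻¹ ∈ A)
    (hgen : Subgroup.closure (insert t (G : Set K)) = ⊤)
    (britton : BrittonProperty G A B t)
    {n : ℕ} (g h : Fin (n + 1) → K) (ε η : Fin n → ℤ)
    (hg : ∀ i, g i ∈ G) (hh : ∀ i, h i ∈ G)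
    (hε : ∀ i, ε i = 1 ∨ ε i = -1) (hη : ∀ i, η i = 1 ∨ η i = -1)
    (hgr : ReducedWord A B g ε) (hhr : ReducedWord A B h η)
    (heq : wordProd t g ε = wordProd t h η) :
    (∀ i, ε i = η i) ∧
    ∃ c : Fin (n + 1) → K, c (Fin.last n) = 1 ∧
      (∀ i : Fin n, (ε i = 1 → c i.castSucc ∈ A) ∧ (ε i = -1 → c i.castSucc ∈ B)) ∧
      g 0 = h 0 * c 0 ∧
      (∀ i : Fin n,
        g i.succ = (t ^ ε i)⁻¹ * (c i.castSucc)⁻¹ * t ^ ε i * h i.succ * c i.succ) :=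
  key G A B t hA hB ht ht' britton n g h ε η hg hh hε hη hgr hhr heq

end HNNStmt
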